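/- Let H be a bounded self-adjoint operator on a complex Hilbert space 𝓗 and let P be an orthogonal projection on 𝓗. Then for every real t, the operators (exp(−(it/n)H) ∘ P)^n converge in operator norm, as n → ∞, to exp(−it·(P∘H∘P)) ∘ P. -/

import Mathlib

open scoped InnerProductSpace Topology
open NormedSpace

section ZenoAux

variable {𝔸 : Type*} [NormedRing 𝔸] [NormedAlgebra ℂ 𝔸] [CompleteSpace 𝔸] [NormOneClass 𝔸]

set_option maxHeartbeats 1000000 in
lemma zeno_exp_tail (x : 𝔸) (k : ℕ) :
    ‖exp x - ∑ i ∈ Finset.range k, ((i.factorial : ℂ))⁻¹ • x ^ i‖ ≤ ‖x‖ ^ k * Real.exp ‖x‖ := by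
  set f : ℕ → 𝔸 := fun n => ((n.factorial : ℂ))⁻¹ • x ^ n with hf
  have hsumn : Summable fun n => ‖f n‖ := norm_expSeries_summable' x
  have hsum : Summable f := hsumn.of_norm
  have hexp : exp x = ∑' n, f n := by rw [exp_eq_tsum ℂ]
  have hkey : exp x - ∑ i ∈ Finset.range k, f i = ∑' i, f (i + k) := by
    rw [hexp, ← hsum.sum_add_tsum_nat_add k]
    abel
  rw [hkey]
  have hb : ∀ i, ‖f (i + k)‖ ≤ ‖x‖ ^ k * (‖x‖ ^ i / (i.factorial : ℝ)) := by
    intro i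
    have h1 : ‖f (i + k)‖ = ((i + k).factorial : ℝ)⁻¹ * ‖x ^ (i + k)‖ := by
      rw [hf]; simp [norm_smul]
    have h2 : ‖x ^ (i + k)‖ ≤ ‖x‖ ^ (i + k) := norm_pow_le x _
    have h3 : ((i + k).factorial : ℝ)⁻¹ ≤ ((i.factorial : ℝ))⁻¹ := by
      apply inv_anti₀
      · exact_mod_cast i.factorial_pos
      · exact_mod_cast Nat.factorial_le (Nat.le_add_right i k)
    calc ‖f (i + k)‖ ≤ ((i.factorial : ℝ))⁻¹ * ‖x‖ ^ (i + k) := by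
          rw [h1]
          exact mul_le_mul h3 h2 (norm_nonneg _) (by positivity)
      _ = ‖x‖ ^ k * (‖x‖ ^ i / (i.factorial : ℝ)) := by
          rw [pow_add]; ring
  have hsumR : Summable fun i : ℕ => ‖x‖ ^ k * (‖x‖ ^ i / (i.factorial : ℝ)) :=
    (Real.summable_pow_div_factorial ‖x‖).mul_left _
  have s1 : ‖∑' i, f (i + k)‖ ≤ ∑' i, ‖f (i + k)‖ :=
    norm_tsum_le_tsum_norm ((summable_nat_add_iff k).2 hsumn)
  have s2 : ∑' i, ‖f (i + k)‖ ≤ ∑' i, ‖x‖ ^ k * (‖x‖ ^ i / (i.factorial : ℝ)) :=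
    Summable.tsum_le_tsum hb ((summable_nat_add_iff k).2 hsumn) hsumR
  have s3 : ∑' i : ℕ, ‖x‖ ^ k * (‖x‖ ^ i / (i.factorial : ℝ)) = ‖x‖ ^ k * Real.exp ‖x‖ := by
    rw [tsum_mul_left, Real.exp_eq_exp_ℝ, exp_eq_tsum_div]
  linarith

lemma zeno_norm_exp_le (x : 𝔸) {r : ℝ} (hx : ‖x‖ ≤ r) : ‖exp x‖ ≤ Real.exp r := by
  have h := zeno_exp_tail x 0
  simp only [Finset.range_zero, Finset.sum_empty, sub_zero, pow_zero, one_mul] at h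
  exact h.trans (Real.exp_le_exp.2 hx)

lemma zeno_norm_exp_sub_one_le (x : 𝔸) {r : ℝ} (hr : 0 ≤ r) (hx : ‖x‖ ≤ r) :
    ‖exp x - 1‖ ≤ r * Real.exp r := by
  have h := zeno_exp_tail x 1
  simp only [Finset.range_one, Finset.sum_singleton, Nat.factorial_zero, Nat.cast_one, inv_one,
    one_smul, pow_zero, pow_one] at h
  calc ‖exp x - 1‖ ≤ ‖x‖ * Real.exp ‖x‖ := h
    _ ≤ r * Real.exp r := by
        apply mul_le_mul hx (Real.exp_le_exp.2 hx) (Real.exp_nonneg _) hr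

lemma zeno_norm_exp_sub_one_sub_le (x : 𝔸) {r : ℝ} (hr : 0 ≤ r) (hx : ‖x‖ ≤ r) :
    ‖exp x - 1 - x‖ ≤ r ^ 2 * Real.exp r := by
  have h := zeno_exp_tail x 2
  have hs : ∑ i ∈ Finset.range 2, ((i.factorial : ℂ))⁻¹ • x ^ i = 1 + x := by
    simp [Finset.sum_range_succ]
  rw [hs, ← sub_sub] at h
  calc ‖exp x - 1 - x‖ ≤ ‖x‖ ^ 2 * Real.exp ‖x‖ := h
    _ ≤ r ^ 2 * Real.exp r := by
        apply mul_le_mul (by nlinarith [norm_nonneg x]) (Real.exp_le_exp.2 hx)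
          (Real.exp_nonneg _) (by positivity)

omit [NormedAlgebra ℂ 𝔸] [CompleteSpace 𝔸] in
lemma zeno_pow_sub_pow (a b : 𝔸) {M : ℝ} (hM : 1 ≤ M) (ha : ‖a‖ ≤ M) (hb : ‖b‖ ≤ M) (k : ℕ) :
    ‖a ^ k - b ^ k‖ ≤ k * M ^ k * ‖a - b‖ := by
  induction k with
  | zero => simp
  | succ k ih =>
    have hM0 : (0:ℝ) ≤ M := zero_le_one.trans hM
    have hak : ‖a ^ k‖ ≤ M ^ k := (norm_pow_le a k).trans (pow_le_pow_left₀ (norm_nonneg a) ha k)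
    have key : a ^ (k+1) - b ^ (k+1) = a ^ k * (a - b) + (a ^ k - b ^ k) * b := by noncomm_ring
    have h1 : ‖a ^ (k+1) - b ^ (k+1)‖ ≤ ‖a ^ k‖ * ‖a - b‖ + ‖a ^ k - b ^ k‖ * ‖b‖ := by
      rw [key]
      exact (norm_add_le _ _).trans (add_le_add (norm_mul_le _ _) (norm_mul_le _ _))
    have h2 : ‖a ^ k‖ * ‖a - b‖ ≤ M ^ k * ‖a - b‖ :=
      mul_le_mul_of_nonneg_right hak (norm_nonneg _)
    have h3 : ‖a ^ k - b ^ k‖ * ‖b‖ ≤ (k * M ^ k * ‖a - b‖) * M :=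
      mul_le_mul ih hb (norm_nonneg _) (by positivity)
    have h4 : M ^ k * ‖a - b‖ + (k * M ^ k * ‖a - b‖) * M ≤ (k+1 : ℕ) * M ^ (k+1) * ‖a - b‖ := by
      have hnk : (0:ℝ) ≤ (k:ℝ) := k.cast_nonneg
      have hpk : (0:ℝ) ≤ M ^ k * ‖a - b‖ := by positivity
      have h5 : (1:ℝ) + k * M ≤ ((k:ℝ)+1) * M := by nlinarith
      have h6 := mul_le_mul_of_nonneg_left h5 hpk
      rw [pow_succ]
      push_cast
      nlinarith [h6]
    calc ‖a ^ (k+1) - b ^ (k+1)‖ ≤ M ^ k * ‖a - b‖ + (k * M ^ k * ‖a - b‖) * M := by linarith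
      _ ≤ (k+1 : ℕ) * M ^ (k+1) * ‖a - b‖ := h4

end ZenoAux

lemma zeno_norm_proj_le_one {𝓗 : Type*} [NormedAddCommGroup 𝓗] [InnerProductSpace ℂ 𝓗]
    (P : 𝓗 →L[ℂ] 𝓗) (hPproj : P ∘L P = P)
    (hPsa : ∀ x y : 𝓗, ⟪P x, y⟫_ℂ = ⟪x, P y⟫_ℂ) : ‖P‖ ≤ 1 := by
  refine P.opNorm_le_bound zero_le_one fun x => ?_
  rw [one_mul]
  have hPP : P (P x) = P x := by
    conv_rhs => rw [← hPproj]
    rfl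
  have h1 : (‖P x‖ : ℝ) ^ 2 = (⟪P x, P x⟫_ℂ).re :=
    (inner_self_eq_norm_sq (𝕜 := ℂ) (P x)).symm
  have h2 : ⟪P x, P x⟫_ℂ = ⟪x, P x⟫_ℂ := by rw [hPsa x (P x), hPP]
  have h3 : (⟪x, P x⟫_ℂ).re ≤ ‖x‖ * ‖P x‖ :=
    (Complex.re_le_norm _).trans (norm_inner_le_norm (𝕜 := ℂ) x (P x))
  rw [h2] at h1
  nlinarith [norm_nonneg (P x), norm_nonneg x]

set_option maxHeartbeats 2000000 in
/-- **Non-symmetric Zeno product formula** (first version): for a bounded self-adjoint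
operator `H` and an orthogonal projection `P`, `(e^{-itH/n} P)^n → e^{-it P H P} P`
in operator norm as `n → ∞`. -/
theorem zeno_product_formula_nonsymmetric_right
    {𝓗 : Type*} [NormedAddCommGroup 𝓗] [InnerProductSpace ℂ 𝓗] [CompleteSpace 𝓗]
    (H P : 𝓗 →L[ℂ] 𝓗)
    (hH : ∀ x y : 𝓗, ⟪H x, y⟫_ℂ = ⟪x, H y⟫_ℂ)
    (hPproj : P ∘L P = P)
    (hPsa : ∀ x y : 𝓗, ⟪P x, y⟫_ℂ = ⟪x, P y⟫_ℂ)
    (t : ℝ) :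
    Filter.Tendsto
      (fun n : ℕ => (NormedSpace.exp ((-(Complex.I * (t / n))) • H) ∘L P) ^ n)
      Filter.atTop
      (𝓝 (NormedSpace.exp ((-(Complex.I * t)) • (P ∘L H ∘L P)) ∘L P)) := by
  rcases subsingleton_or_nontrivial 𝓗 with hsub | hnt
  · have hss : Subsingleton (𝓗 →L[ℂ] 𝓗) :=
      ⟨fun f g => ContinuousLinearMap.ext fun x => Subsingleton.elim _ _⟩
    have heq : (fun n : ℕ => (NormedSpace.exp ((-(Complex.I * (t / n))) • H) ∘L P) ^ n)
        = fun _ => NormedSpace.exp ((-(Complex.I * t)) • (P ∘L H ∘L P)) ∘L P :=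
      funext fun n => Subsingleton.elim _ _
    rw [heq]
    exact tendsto_const_nhds
  · set Q : 𝓗 →L[ℂ] 𝓗 := P ∘L H ∘L P with hQdef
    have hQmul : Q = P * H * P := rfl
    have hP2 : P * P = P := hPproj
    have hP1 : ‖P‖ ≤ 1 := zeno_norm_proj_le_one P hPproj hPsa
    have hPl : ∀ Z : 𝓗 →L[ℂ] 𝓗, P * (P * Z) = P * Z := fun Z => by rw [← mul_assoc, hP2]
    set R := |t| * ‖H‖ with hRdef
    have hR0 : 0 ≤ R := by positivity
    set B := Real.exp R with hBdef
    have hB1 : 1 ≤ B := Real.one_le_exp hR0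
    set K := 2 * B ^ 3 * (R ^ 2 + R) with hKdef
    rw [tendsto_iff_norm_sub_tendsto_zero]
    apply squeeze_zero' (Filter.Eventually.of_forall fun n => norm_nonneg _) ?_
      (tendsto_const_div_atTop_nhds_zero_nat K)
    rw [Filter.eventually_atTop]
    refine ⟨1, fun n hn => ?_⟩
    obtain ⟨k, rfl⟩ : ∃ k, n = k + 1 := ⟨n - 1, (Nat.succ_pred_eq_of_pos hn).symm⟩
    set c : ℂ := -(Complex.I * ((t : ℂ) / ((k + 1 : ℕ) : ℂ))) with hcdef
    set x : 𝓗 →L[ℂ] 𝓗 := c • H with hxdef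
    set y : 𝓗 →L[ℂ] 𝓗 := c • Q with hydef
    set E : 𝓗 →L[ℂ] 𝓗 := NormedSpace.exp x with hEdef
    set C : 𝓗 →L[ℂ] 𝓗 := NormedSpace.exp y with hCdef
    set T : 𝓗 →L[ℂ] 𝓗 := NormedSpace.exp ((-(Complex.I * t)) • Q) * P with hTdef
    set r : ℝ := R / ((k : ℝ) + 1) with hrdef
    have hk1 : (0 : ℝ) < (k : ℝ) + 1 := by positivity
    have hr0 : 0 ≤ r := by positivity
    have hrR : r ≤ R := by
      rw [hrdef]
      exact div_le_self hR0 (by linarith [Nat.cast_nonneg (α := ℝ) k])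
    set M := Real.exp r with hMdef
    have hM0 : (0:ℝ) < M := Real.exp_pos r
    have hM1 : 1 ≤ M := Real.one_le_exp hr0
    have hMB : M ≤ B := Real.exp_le_exp.2 hrR
    -- norm of c
    have hc : ‖c‖ = |t| / ((k : ℝ) + 1) := by
      rw [hcdef, norm_neg, norm_mul, Complex.norm_I, one_mul, norm_div,
        Complex.norm_real, Complex.norm_natCast, Real.norm_eq_abs]
      push_cast
      ring
    have hQn : ‖Q‖ ≤ ‖H‖ := by
      have h0 : ‖Q‖ = ‖P * (H * P)‖ := rfl
      have h1 : ‖P * (H * P)‖ ≤ ‖P‖ * ‖H * P‖ := norm_mul_le _ _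
      have h2 : ‖H * P‖ ≤ ‖H‖ * ‖P‖ := norm_mul_le _ _
      rw [h0]
      nlinarith [norm_nonneg H, norm_nonneg P, norm_nonneg (H * P)]
    have hxr : ‖x‖ ≤ r := by
      rw [hxdef, norm_smul, hc, hrdef, hRdef]
      rw [div_mul_eq_mul_div]
    have hyr : ‖y‖ ≤ r := by
      rw [hydef, norm_smul, hc]
      calc |t| / ((k:ℝ)+1) * ‖Q‖ ≤ |t| / ((k:ℝ)+1) * ‖H‖ :=
            mul_le_mul_of_nonneg_left hQn (by positivity)
        _ = r := by rw [hrdef, hRdef, div_mul_eq_mul_div]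
    -- basic exp bounds
    have hEM : ‖E‖ ≤ M := zeno_norm_exp_le x hxr
    have hCM : ‖C‖ ≤ M := zeno_norm_exp_le y hyr
    have hE1 : ‖E - 1‖ ≤ r * M := zeno_norm_exp_sub_one_le x hr0 hxr
    have hC1 : ‖C - 1‖ ≤ r * M := zeno_norm_exp_sub_one_le y hr0 hyr
    have hE2 : ‖E - 1 - x‖ ≤ r ^ 2 * M := zeno_norm_exp_sub_one_sub_le x hr0 hxr
    have hC2 : ‖C - 1 - y‖ ≤ r ^ 2 * M := zeno_norm_exp_sub_one_sub_le y hr0 hyr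
    -- sandwich bound
    have hsand : ∀ Z : 𝓗 →L[ℂ] 𝓗, ‖P * Z * P‖ ≤ ‖Z‖ := by
      intro Z
      have h1 : ‖P * Z * P‖ ≤ ‖P * Z‖ * ‖P‖ := norm_mul_le _ _
      have h2 : ‖P * Z‖ ≤ ‖P‖ * ‖Z‖ := norm_mul_le _ _
      nlinarith [norm_nonneg Z, norm_nonneg P, norm_nonneg (P * Z)]
    -- middle sandwiched difference is second order
    have hxyP : P * x * P = P * y * P := by
      have hPQP : P * (Q * P) = P * (H * P) := by
        rw [hQmul]
        simp only [mul_assoc, hP2, hPl]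
      rw [hxdef, hydef]
      simp only [mul_smul_comm, smul_mul_assoc, mul_assoc]
      rw [hPQP]
    have hmid : ‖P * E * P - P * C * P‖ ≤ 2 * (r ^ 2 * M) := by
      have hid : P * E * P - P * C * P = P * (E - 1 - x) * P - P * (C - 1 - y) * P := by
        have expand : P * (E - 1 - x) * P - P * (C - 1 - y) * P
            = (P * E * P - P * C * P) - (P * x * P - P * y * P) := by noncomm_ring
        rw [expand, hxyP, sub_self, sub_zero]
      rw [hid]
      calc ‖P * (E - 1 - x) * P - P * (C - 1 - y) * P‖
          ≤ ‖P * (E - 1 - x) * P‖ + ‖P * (C - 1 - y) * P‖ := norm_sub_le _ _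
        _ ≤ ‖E - 1 - x‖ + ‖C - 1 - y‖ := add_le_add (hsand _) (hsand _)
        _ ≤ 2 * (r ^ 2 * M) := by linarith
    -- commutation of C with P
    have hcommC : Commute P C := by
      have hPQ : Commute P Q := by
        show P * Q = Q * P
        rw [hQmul]
        simp only [mul_assoc, hP2, hPl]
      exact ((hPQ.smul_right c).exp_right)
    have hPCpow : ∀ m : ℕ, P * (C ^ m * P) = C ^ m * P := by
      intro m
      rw [← mul_assoc, (hcommC.pow_right m).eq, mul_assoc, hP2]
    have hCkP : ∀ m : ℕ, (P * C * P) ^ m * P = C ^ m * P := by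
      intro m
      induction m with
      | zero => simp
      | succ m ih =>
        calc (P * C * P) ^ (m + 1) * P = (P * C * P) * ((P * C * P) ^ m * P) := by
              rw [pow_succ']; rw [mul_assoc]
          _ = P * (C * (P * (C ^ m * P))) := by rw [ih]; simp only [mul_assoc]
          _ = P * (C * (C ^ m * P)) := by rw [hPCpow m]
          _ = P * (C ^ (m + 1) * P) := by rw [← mul_assoc C, ← pow_succ']
          _ = C ^ (m + 1) * P := hPCpow (m + 1)
    -- product formula
    have hEPn : ∀ m : ℕ, (E * P) ^ (m + 1) = E * ((P * E * P) ^ m * P) := by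
      intro m
      induction m with
      | zero => simp
      | succ m ih =>
        rw [pow_succ, ih]
        conv_rhs => rw [pow_succ]
        simp only [mul_assoc, hP2]
    -- C^(k+1) is the limit exponential
    have hCn : NormedSpace.exp ((-(Complex.I * t)) • Q) = C ^ (k + 1) := by
      have hnne : ((k + 1 : ℕ) : ℂ) ≠ 0 := Nat.cast_ne_zero.2 (Nat.succ_ne_zero k)
      have hnne' : ((k : ℂ) + 1) ≠ 0 := by push_cast at hnne; exact hnne
      have hsc : (-(Complex.I * t)) • Q = ((k + 1 : ℕ) : ℂ) • y := by
        rw [hydef, smul_smul]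
        congr 1
        rw [hcdef]
        field_simp
      letI : NormedAlgebra ℚ (𝓗 →L[ℂ] 𝓗) := NormedAlgebra.restrictScalars ℚ ℂ (𝓗 →L[ℂ] 𝓗)
      rw [hsc, Nat.cast_smul_eq_nsmul, exp_nsmul, hCdef]
    -- decomposition
    have hdec : (E * P) ^ (k + 1) - T
        = E * (((P * E * P) ^ k - (P * C * P) ^ k) * P) + (E - C) * (C ^ k * P) := by
      rw [hTdef, hCn, hEPn k]
      rw [sub_mul, mul_sub, hCkP k, sub_mul]
      rw [pow_succ', mul_assoc]
      abel
    -- telescoping bound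
    have hA : ‖P * E * P‖ ≤ M := (hsand E).trans hEM
    have hB' : ‖P * C * P‖ ≤ M := (hsand C).trans hCM
    have htel : ‖(P * E * P) ^ k - (P * C * P) ^ k‖ ≤ (k : ℝ) * M ^ k * (2 * (r ^ 2 * M)) :=
      (zeno_pow_sub_pow _ _ hM1 hA hB' k).trans
        (mul_le_mul_of_nonneg_left hmid (by positivity))
    have hEC : ‖E - C‖ ≤ 2 * (r * M) := by
      have h : E - C = (E - 1) - (C - 1) := by abel
      rw [h]
      calc ‖(E - 1) - (C - 1)‖ ≤ ‖E - 1‖ + ‖C - 1‖ := norm_sub_le _ _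
        _ ≤ 2 * (r * M) := by linarith
    have hCk : ‖C ^ k‖ ≤ M ^ k := (norm_pow_le C k).trans (pow_le_pow_left₀ (norm_nonneg C) hCM k)
    have hMkB : M ^ k ≤ B := by
      rw [hMdef, ← Real.exp_nat_mul]
      apply Real.exp_le_exp.2
      rw [hrdef, mul_div_assoc']
      rw [div_le_iff₀ hk1]
      nlinarith [Nat.cast_nonneg (α := ℝ) k, hR0]
    -- final norm chain
    have hnormchain : ‖(E * P) ^ (k + 1) - T‖
        ≤ M * (((k : ℝ) * M ^ k * (2 * (r ^ 2 * M))) * ‖P‖) + (2 * (r * M)) * (M ^ k * ‖P‖) := by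
      rw [hdec]
      have n1 : ‖E * (((P * E * P) ^ k - (P * C * P) ^ k) * P)‖
          ≤ ‖E‖ * (‖(P * E * P) ^ k - (P * C * P) ^ k‖ * ‖P‖) :=
        (norm_mul_le _ _).trans (mul_le_mul_of_nonneg_left (norm_mul_le _ _) (norm_nonneg _))
      have n2 : ‖(E - C) * (C ^ k * P)‖ ≤ ‖E - C‖ * (‖C ^ k‖ * ‖P‖) :=
        (norm_mul_le _ _).trans (mul_le_mul_of_nonneg_left (norm_mul_le _ _) (norm_nonneg _))
      calc ‖E * (((P * E * P) ^ k - (P * C * P) ^ k) * P) + (E - C) * (C ^ k * P)‖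
          ≤ ‖E * (((P * E * P) ^ k - (P * C * P) ^ k) * P)‖ + ‖(E - C) * (C ^ k * P)‖ :=
            norm_add_le _ _
        _ ≤ ‖E‖ * (‖(P * E * P) ^ k - (P * C * P) ^ k‖ * ‖P‖)
            + ‖E - C‖ * (‖C ^ k‖ * ‖P‖) := add_le_add n1 n2
        _ ≤ M * (((k : ℝ) * M ^ k * (2 * (r ^ 2 * M))) * ‖P‖) + (2 * (r * M)) * (M ^ k * ‖P‖) := by
            gcongr <;> positivity
    -- numeric estimate
    have t1 : (k : ℝ) * r ^ 2 + r ≤ (R ^ 2 + R) / ((k : ℝ) + 1) := by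
      have ha : (k:ℝ) * r ^ 2 ≤ R ^ 2 / ((k:ℝ) + 1) := by
        rw [hrdef, div_pow, ← mul_div_assoc, div_le_div_iff₀ (by positivity) hk1]
        nlinarith [mul_nonneg (sq_nonneg R) hk1.le, Nat.cast_nonneg (α := ℝ) k, sq_nonneg R]
      calc (k:ℝ) * r ^ 2 + r ≤ R ^ 2 / ((k:ℝ) + 1) + R / ((k:ℝ) + 1) :=
            add_le_add ha (le_of_eq hrdef)
        _ = (R ^ 2 + R) / ((k:ℝ) + 1) := (add_div _ _ _).symm
    have hnum : M * (((k : ℝ) * M ^ k * (2 * (r ^ 2 * M))) * ‖P‖)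
        + (2 * (r * M)) * (M ^ k * ‖P‖) ≤ K / ((k + 1 : ℕ) : ℝ) := by
      have step1 : M * (((k : ℝ) * M ^ k * (2 * (r ^ 2 * M))) * ‖P‖)
          + (2 * (r * M)) * (M ^ k * ‖P‖)
          = 2 * ((k : ℝ) * r ^ 2) * (M * M * M ^ k * ‖P‖) + 2 * r * (M * M ^ k * ‖P‖) := by
        ring
      have hkr2 : (0:ℝ) ≤ (k : ℝ) * r ^ 2 := by positivity
      have step2 : 2 * ((k : ℝ) * r ^ 2) * (M * M * M ^ k * ‖P‖) + 2 * r * (M * M ^ k * ‖P‖)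
          ≤ 2 * ((k : ℝ) * r ^ 2) * (B * B * B * 1) + 2 * r * (B * B * 1) := by
        gcongr <;> positivity
      have step3 : 2 * ((k : ℝ) * r ^ 2) * (B * B * B * 1) + 2 * r * (B * B * 1)
          ≤ 2 * B ^ 3 * ((k : ℝ) * r ^ 2 + r) := by
        have hB0 : (0:ℝ) ≤ B := by linarith
        nlinarith [mul_nonneg hr0 (mul_nonneg hB0 hB0)]
      have step4 : 2 * B ^ 3 * ((k : ℝ) * r ^ 2 + r) ≤ 2 * B ^ 3 * ((R ^ 2 + R) / ((k : ℝ) + 1)) := by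
        apply mul_le_mul_of_nonneg_left t1 (by positivity)
      have step5 : 2 * B ^ 3 * ((R ^ 2 + R) / ((k : ℝ) + 1)) = K / ((k + 1 : ℕ) : ℝ) := by
        rw [hKdef]
        push_cast
        ring
      linarith
    calc ‖(NormedSpace.exp ((-(Complex.I * ((t : ℂ) / ((k + 1 : ℕ) : ℂ)))) • H) ∘L P) ^ (k + 1)
          - NormedSpace.exp ((-(Complex.I * t)) • (P ∘L H ∘L P)) ∘L P‖
        = ‖(E * P) ^ (k + 1) - T‖ := rfl
      _ ≤ M * (((k : ℝ) * M ^ k * (2 * (r ^ 2 * M))) * ‖P‖)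
          + (2 * (r * M)) * (M ^ k * ‖P‖) := hnormchain
      _ ≤ K / ((k + 1 : ℕ) : ℝ) := hnum
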